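/- arXiv:1401.5384 — 5 statements merged into one kernel-verified Lean document; each statement's English description precedes it below -/
import Mathlib

section
/- Let ℳ be a ℂ-linear subspace of 𝕊 containing a nonzero element, and let h(ℳ) := min{h(q) : q ∈ ℳ, q ≠ 0}. If r, p ∈ ℳ are nonzero and h(r) = h(p) = h(ℳ), then r = c·p for some c ∈ ℂ. -/
open Polynomial

/-- The height of an `n`-dimensional vector polynomial `p = (P_1, ..., P_n)`:
`h(p) = max (n * deg P_j + j - 1)` over `1 <= j <= n`, taken in `Z union {-infty}`,
with `deg 0 = -infty` and `h(0) = -infty`.  (Entries are indexed by `j : Fin n`,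
so `j.val` plays the role of `j - 1`.) -/
noncomputable def height (n : ℕ) (p : Fin n → ℂ[X]) : WithBot ℤ :=
  Finset.univ.sup fun j => if p j = 0 then (⊥ : WithBot ℤ)
    else (((n * (p j).natDegree + j.val : ℕ) : ℤ) : WithBot ℤ)

/-- The solution set `S` of the interpolation problem: all vector polynomials
`p` such that the linear combination of the entries evaluated at the node `z j`
with coefficients `α j` vanishes, for every node `j`. -/
def Sol (n N : ℕ) (z : Fin N → ℂ) (α : Fin N → Fin n → ℂ) : Set (Fin n → ℂ[X]) :=
  {p | ∀ j : Fin N, ∑ k : Fin n, α j k * (p k).eval (z j) = 0}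

private lemma nat_mod_lemma {n a j : ℕ} (hj : j < n) : (n * a + j) % n = j := by
  simp [Nat.mul_add_mod, Nat.mod_eq_of_lt hj]

/-- Let `M` be a `ℂ`-linear subspace of the solution set `S` containing a
nonzero element, and let `h(M)` be the minimal height of nonzero elements of
`M`.  If `r, p ∈ M` are nonzero with `h(r) = h(p) = h(M)`, then `r = c • p`
for some `c : ℂ`. -/
theorem stmt_11 (n N : ℕ) (hn : 1 ≤ n) (hN : 1 ≤ N)
    (z : Fin N → ℂ) (α : Fin N → Fin n → ℂ)
    (hα : ∀ j : Fin N, 0 < ∑ k : Fin n, ‖α j k‖)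
    (M : Submodule ℂ (Fin n → ℂ[X]))
    (hM : (M : Set (Fin n → ℂ[X])) ⊆ Sol n N z α)
    (r p : Fin n → ℂ[X]) (hrM : r ∈ M) (hpM : p ∈ M)
    (hr0 : r ≠ 0) (hp0 : p ≠ 0)
    (hrp : height n r = height n p)
    (hmin : ∀ q ∈ M, q ≠ 0 → height n r ≤ height n q) :
    ∃ c : ℂ, r = c • p := by
  classical
  have hnpos : 0 < n := hn
  haveI : Nonempty (Fin n) := ⟨⟨0, hnpos⟩⟩
  set fr : Fin n → WithBot ℤ := fun j => if r j = 0 then (⊥ : WithBot ℤ)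
    else (((n * (r j).natDegree + j.val : ℕ) : ℤ) : WithBot ℤ) with hfr
  set fp : Fin n → WithBot ℤ := fun j => if p j = 0 then (⊥ : WithBot ℤ)
    else (((n * (p j).natDegree + j.val : ℕ) : ℤ) : WithBot ℤ) with hfp
  have hhr : height n r = Finset.univ.sup fr := rfl
  have hhp : height n p = Finset.univ.sup fp := rfl
  obtain ⟨j0, -, hj0⟩ := Finset.exists_mem_eq_sup (Finset.univ : Finset (Fin n))
    Finset.univ_nonempty fr
  obtain ⟨j1, -, hj1⟩ := Finset.exists_mem_eq_sup (Finset.univ : Finset (Fin n))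
    Finset.univ_nonempty fp
  -- height n r is not ⊥
  obtain ⟨k, hk⟩ : ∃ k, r k ≠ 0 := by
    by_contra h; push_neg at h; exact hr0 (funext h)
  have hbot : height n r ≠ ⊥ := by
    have h1 : fr k ≤ height n r := by rw [hhr]; exact Finset.le_sup (Finset.mem_univ k)
    intro hb
    rw [hb, le_bot_iff, hfr] at h1
    simp only [hk, if_neg, ne_eq, not_false_iff] at h1
    exact (WithBot.coe_ne_bot) h1
  have hrj0 : r j0 ≠ 0 := by
    intro h
    apply hbot
    rw [hhr, hj0, hfr]; simp [h]
  have hpj1 : p j1 ≠ 0 := by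
    intro h
    apply hbot
    rw [hrp, hhp, hj1, hfp]; simp [h]
  have hr_eq : height n r = (((n * (r j0).natDegree + j0.val : ℕ) : ℤ) : WithBot ℤ) := by
    rw [hhr, hj0, hfr]; simp [hrj0]
  have hp_eq : height n p = (((n * (p j1).natDegree + j1.val : ℕ) : ℤ) : WithBot ℤ) := by
    rw [hhp, hj1, hfp]; simp [hpj1]
  have key : n * (r j0).natDegree + j0.val = n * (p j1).natDegree + j1.val := by
    have := hr_eq.symm.trans (hrp.trans hp_eq)
    exact_mod_cast this
  have hj01 : j0.val = j1.val := by
    have h1 := nat_mod_lemma (n := n) (a := (r j0).natDegree) j0.isLt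
    have h2 := nat_mod_lemma (n := n) (a := (p j1).natDegree) j1.isLt
    rw [key, h2] at h1
    exact h1.symm
  have hj0j1 : j0 = j1 := Fin.ext hj01
  subst hj0j1
  have hd : (r j0).natDegree = (p j0).natDegree :=
    Nat.eq_of_mul_eq_mul_left hnpos (by omega)
  set c : ℂ := (r j0).leadingCoeff / (p j0).leadingCoeff with hc
  have hlcp : (p j0).leadingCoeff ≠ 0 := leadingCoeff_ne_zero.mpr hpj1
  have hlcr : (r j0).leadingCoeff ≠ 0 := leadingCoeff_ne_zero.mpr hrj0
  have hcne : c ≠ 0 := div_ne_zero hlcr hlcp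
  have hclc : c * (p j0).leadingCoeff = (r j0).leadingCoeff := div_mul_cancel₀ _ hlcp
  refine ⟨c, ?_⟩
  by_contra hne
  set q : Fin n → ℂ[X] := r - c • p with hq
  have hq0 : q ≠ 0 := fun h => hne (sub_eq_zero.mp h)
  have hqM : q ∈ M := M.sub_mem hrM (M.smul_mem c hpM)
  have hle := hmin q hqM hq0
  -- bounds for entries of r and p
  have hfr_le : ∀ j, fr j ≤ height n r := fun j => by
    rw [hhr]; exact Finset.le_sup (Finset.mem_univ j)
  have hfp_le : ∀ j, fp j ≤ height n r := fun j => by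
    rw [hrp, hhp]; exact Finset.le_sup (Finset.mem_univ j)
  -- generic strict bound off the leading index
  have hstep : ∀ (s : Fin n → ℂ[X]),
      (∀ jj, (if s jj = 0 then (⊥ : WithBot ℤ)
        else (((n * (s jj).natDegree + jj.val : ℕ) : ℤ) : WithBot ℤ)) ≤ height n r) →
      ∀ jj : Fin n, jj ≠ j0 → s jj ≠ 0 →
        n * (s jj).natDegree + jj.val < n * (r j0).natDegree + j0.val := by
    intro s hs jj hjj hsjj
    have h1 := hs jj
    rw [if_neg hsjj, hr_eq] at h1
    have h2 : n * (s jj).natDegree + jj.val ≤ n * (r j0).natDegree + j0.val := by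
      exact_mod_cast h1
    rcases lt_or_eq_of_le h2 with h | h
    · exact h
    · exfalso
      have e1 := nat_mod_lemma (n := n) (a := (s jj).natDegree) jj.isLt
      have e2 := nat_mod_lemma (n := n) (a := (r j0).natDegree) j0.isLt
      rw [h, e2] at e1
      exact hjj (Fin.ext e1.symm)
  -- the key strict inequality
  have hlt : height n q < height n r := by
    have hbot' : (⊥ : WithBot ℤ) < height n r := by
      rw [hr_eq]; exact WithBot.bot_lt_coe _
    rw [show height n q = Finset.univ.sup fun j => if q j = 0 then (⊥ : WithBot ℤ)
        else (((n * (q j).natDegree + j.val : ℕ) : ℤ) : WithBot ℤ) from rfl]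
    rw [Finset.sup_lt_iff hbot']
    intro j _
    by_cases hqj : q j = 0
    · simpa [hqj] using hbot'
    · rw [if_neg hqj]
      have hqj' : q j = r j - c • p j := by simp [hq]
      have hdeg : (q j).degree ≤ max (r j).degree (p j).degree := by
        calc (q j).degree ≤ max (r j).degree ((c • p j)).degree := by
              rw [hqj']; exact degree_sub_le _ _
          _ ≤ max (r j).degree (p j).degree :=
              max_le_max le_rfl (degree_smul_le _ _)
      by_cases hjj0 : j = j0
      · subst hjj0
        have hdeg_eq : (r j).degree = (c • p j).degree := by
          rw [smul_eq_C_mul, degree_C_mul hcne,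
            degree_eq_natDegree hrj0, degree_eq_natDegree hpj1, hd]
        have hlc_eq : (r j).leadingCoeff = (c • p j).leadingCoeff := by
          rw [smul_eq_C_mul, leadingCoeff_mul, leadingCoeff_C, hclc]
        have hlt' : (q j).degree < (r j).degree := by
          rw [hqj']
          exact degree_sub_lt hdeg_eq hrj0 hlc_eq
        have hnd : (q j).natDegree < (r j).natDegree :=
          natDegree_lt_natDegree hqj hlt'
        rw [hr_eq]
        exact_mod_cast Nat.add_lt_add_right ((mul_lt_mul_iff_right₀ hnpos).mpr hnd) _
      · have hqbot : (q j).degree ≠ ⊥ := fun h => hqj (degree_eq_bot.mp h)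
        rcases le_max_iff.mp hdeg with h | h
        · have hrj : r j ≠ 0 := by
            intro h0
            rw [h0, degree_zero, le_bot_iff] at h
            exact hqbot h
          have hnd : (q j).natDegree ≤ (r j).natDegree := natDegree_le_natDegree h
          have := hstep r (fun jj => hfr_le jj) j hjj0 hrj
          rw [hr_eq]
          have : n * (q j).natDegree + j.val < n * (r j0).natDegree + j0.val := by
            refine lt_of_le_of_lt ?_ this
            exact Nat.add_le_add_right (Nat.mul_le_mul_left _ hnd) _
          exact_mod_cast this
        · have hpj : p j ≠ 0 := by
            intro h0
            rw [h0, degree_zero, le_bot_iff] at h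
            exact hqbot h
          have hnd : (q j).natDegree ≤ (p j).natDegree := natDegree_le_natDegree h
          have := hstep p (fun jj => hfp_le jj) j hjj0 hpj
          rw [hr_eq]
          have : n * (q j).natDegree + j.val < n * (r j0).natDegree + j0.val := by
            refine lt_of_le_of_lt ?_ this
            exact Nat.add_le_add_right (Nat.mul_le_mul_left _ hnd) _
          exact_mod_cast this
  exact absurd hle (not_le.mpr hlt)
end

section
/- There exists a nonzero p ∈ 𝕊 with h(p) ≤ N; consequently the minimal height of nonzero elements of 𝕊 is at most N, i.e., any nonzero element of 𝕊 of minimal height has height ≤ N. -/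
open Polynomial

theorem exists_sol (n N : ℕ) (hn : 1 ≤ n) (hN : 1 ≤ N)
    (z : Fin N → ℂ) (α : Fin N → Fin n → ℂ) :
    ∃ p, (∀ j : Fin N, ∑ k : Fin n, α j k * (p k).eval (z j) = 0) ∧ p ≠ (0 : Fin n → ℂ[X]) ∧
      (Finset.univ.sup fun j => if p j = 0 then (⊥ : WithBot ℤ)
        else (((n * (p j).natDegree + j.val : ℕ) : ℤ) : WithBot ℤ)) ≤ ((N : ℤ) : WithBot ℤ) := by
  have hn0 : 0 < n := hn
  set km : Fin (N + 1) → Fin n := fun m => ⟨m.val % n, Nat.mod_lt _ hn0⟩ with hkm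
  set L : (Fin (N + 1) → ℂ) →ₗ[ℂ] (Fin N → ℂ) :=
    { toFun := fun c j => ∑ m : Fin (N + 1), c m * (α j (km m) * z j ^ (m.val / n))
      map_add' := by intro x y; funext j; simp [add_mul, Finset.sum_add_distrib]
      map_smul' := by intro a x; funext j; simp [Finset.mul_sum, mul_assoc] } with hL
  have hker : LinearMap.ker L ≠ ⊥ := by
    apply LinearMap.ker_ne_bot_of_finrank_lt (f := L)
    simp
  obtain ⟨c, hcK, hc0⟩ := (Submodule.ne_bot_iff _).mp hker
  set p : Fin n → ℂ[X] :=
    fun k => ∑ m : Fin (N + 1), C (c m) * (if k = km m then X ^ (m.val / n) else 0) with hp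
  refine ⟨p, ?_, ?_, ?_⟩
  · intro j
    have hLc : L c j = 0 := by rw [LinearMap.mem_ker.mp hcK]; rfl
    calc ∑ k : Fin n, α j k * (p k).eval (z j)
        = ∑ k : Fin n, ∑ m : Fin (N + 1),
            α j k * (c m * (if k = km m then z j ^ (m.val / n) else 0)) := by
          refine Finset.sum_congr rfl fun k _ => ?_
          rw [hp]
          simp [eval_finset_sum, Finset.mul_sum, apply_ite (eval (z j))]
      _ = ∑ m : Fin (N + 1), ∑ k : Fin n,
            α j k * (c m * (if k = km m then z j ^ (m.val / n) else 0)) := by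
          rw [Finset.sum_comm]
      _ = ∑ m : Fin (N + 1), c m * (α j (km m) * z j ^ (m.val / n)) := by
          refine Finset.sum_congr rfl fun m _ => ?_
          rw [Finset.sum_eq_single (km m)]
          · simp; ring
          · intro b _ hb; simp [hb]
          · simp
      _ = 0 := hLc
  · -- p ≠ 0
    intro hp0
    obtain ⟨m₀, hm₀⟩ : ∃ m₀, c m₀ ≠ 0 := by
      by_contra h; push_neg at h; exact hc0 (funext h)
    have h1 : (p (km m₀)).coeff (m₀.val / n) = c m₀ := by
      rw [hp]
      simp only [finset_sum_coeff]
      rw [Finset.sum_eq_single m₀]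
      · simp [coeff_X_pow]
      · intro m _ hm
        by_cases hkmm : km m₀ = km m
        · have hdiv : m.val / n ≠ m₀.val / n := by
            intro hd
            apply hm
            have h2 : m.val % n = m₀.val % n := congrArg Fin.val hkmm.symm
            have e1 := Nat.div_add_mod m.val n
            have e2 := Nat.div_add_mod m₀.val n
            rw [hd, h2] at e1
            exact Fin.ext (e1.symm.trans e2)
          have hdiv' : m₀.val / n ≠ m.val / n := Ne.symm hdiv
          simp [hkmm, coeff_X_pow, hdiv, hdiv']
        · simp [hkmm]
      · simp
    rw [congrFun hp0 (km m₀)] at h1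
    simp at h1
    exact hm₀ h1.symm
  · -- height bound
    refine Finset.sup_le fun k _ => ?_
    by_cases hpk : p k = 0
    · simp [hpk]
    · simp only [hpk, if_false]
      -- there is m with k = km m and c m ≠ 0, so k.val ≤ N
      obtain ⟨m, -, hm⟩ := Finset.exists_ne_zero_of_sum_ne_zero (hp ▸ hpk)
      have hkm' : k = km m := by
        by_contra h; simp [h] at hm
      have hkN : k.val ≤ N := by
        have h1 : k.val = m.val % n := congrArg Fin.val hkm'
        have h2 := m.isLt
        have h3 := Nat.mod_le m.val n
        omega
      have hdeg : (p k).natDegree ≤ (N - k.val) / n := by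
        rw [hp]
        refine Polynomial.natDegree_sum_le_of_forall_le _ _ fun m' _ => ?_
        by_cases h : k = km m'
        · refine le_trans (natDegree_mul_le) ?_
          simp only [natDegree_C, zero_add, h, if_true, natDegree_X_pow]
          have h2 : k.val = m'.val % n := congrArg Fin.val h
          have h3 : m'.val ≤ N := by have := m'.isLt; omega
          rw [Nat.div_eq_sub_mod_div]
          exact Nat.div_le_div_right (Nat.sub_le_sub_right h3 _)
        · simp [h]
      have hfin : n * (p k).natDegree + k.val ≤ N :=
        calc n * (p k).natDegree + k.val
            ≤ n * ((N - k.val) / n) + k.val :=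
              Nat.add_le_add_right (Nat.mul_le_mul_left n hdeg) _
          _ ≤ (N - k.val) + k.val := Nat.add_le_add_right (Nat.mul_div_le _ _) _
          _ = N := by omega
      exact_mod_cast hfin


/-- There exists a nonzero solution `p ∈ S` with `h(p) ≤ N`; consequently any
nonzero element of `S` of minimal height (a first generator) has height `≤ N`. -/
theorem stmt_12 (n N : ℕ) (hn : 1 ≤ n) (hN : 1 ≤ N)
    (z : Fin N → ℂ) (α : Fin N → Fin n → ℂ)
    (hα : ∀ j : Fin N, 0 < ∑ k : Fin n, ‖α j k‖) :
    (∃ p ∈ Sol n N z α, p ≠ 0 ∧ height n p ≤ ((N : ℤ) : WithBot ℤ)) ∧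
      ∀ p ∈ Sol n N z α, p ≠ 0 →
        (∀ q ∈ Sol n N z α, q ≠ 0 → height n p ≤ height n q) →
        height n p ≤ ((N : ℤ) : WithBot ℤ) := by
  obtain ⟨q, hqSol, hq0, hqN⟩ := exists_sol n N hn hN z α
  have hq : q ∈ Sol n N z α := hqSol
  have hqh : height n q ≤ ((N : ℤ) : WithBot ℤ) := hqN
  refine ⟨⟨q, hq, hq0, hqh⟩, ?_⟩
  intro p _ hp0 hmin
  exact (hmin q hq hq0).trans hqh
end

section
/- For every integer m ≥ N·n there exists p ∈ 𝕊 with h(p) = m. -/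
open Polynomial

/-- For every integer `m ≥ N * n` there exists a solution `p ∈ S` with
`h(p) = m`. -/
theorem stmt_13 (n N : ℕ) (hn : 1 ≤ n) (hN : 1 ≤ N)
    (z : Fin N → ℂ) (α : Fin N → Fin n → ℂ)
    (hα : ∀ j : Fin N, 0 < ∑ k : Fin n, ‖α j k‖)
    (m : ℕ) (hm : N * n ≤ m) :
    ∃ p ∈ Sol n N z α, height n p = ((m : ℤ) : WithBot ℤ) := by
  have hn0 : 0 < n := hn
  set q := m / n with hq
  set r := m % n with hr
  have hrn : r < n := Nat.mod_lt _ hn0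
  have hNq : N ≤ q := (Nat.le_div_iff_mul_le hn0).2 hm
  have hmq : n * q + r = m := Nat.div_add_mod m n
  set P : ℂ[X] := (∏ j : Fin N, (X - C (z j))) * X ^ (q - N) with hP
  have hPmonic : P.Monic := by
    exact (monic_prod_of_monic _ _ fun i _ => monic_X_sub_C (z i)).mul (monic_X_pow _)
  have hPne : P ≠ 0 := hPmonic.ne_zero
  have hPdeg : P.natDegree = q := by
    rw [hP, natDegree_mul (by
      exact (monic_prod_of_monic _ _ fun i _ => monic_X_sub_C (z i)).ne_zero)
      (pow_ne_zero _ X_ne_zero), natDegree_prod]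
    · simp [Nat.add_sub_cancel' hNq]
    · intro i _; exact X_sub_C_ne_zero (z i)
  have hPeval : ∀ j : Fin N, P.eval (z j) = 0 := by
    intro j
    rw [hP, eval_mul, eval_prod]
    rw [Finset.prod_eq_zero (Finset.mem_univ j) (by simp)]
    ring
  set j0 : Fin n := ⟨r, hrn⟩ with hj0
  set p : Fin n → ℂ[X] := fun k => if k = j0 then P else 0 with hpdef
  refine ⟨p, ?_, ?_⟩
  · intro j
    apply Finset.sum_eq_zero
    intro k _
    by_cases hk : k = j0
    · simp [hpdef, hk, hPeval j]
    · simp [hpdef, hk]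
  · have hval : ((n * P.natDegree + j0.val : ℕ) : ℤ) = (m : ℤ) := by
      rw [hPdeg]
      exact_mod_cast congrArg (Nat.cast : ℕ → ℤ) hmq
    apply le_antisymm
    · apply Finset.sup_le
      intro k _
      by_cases hk : k = j0
      · simp [hpdef, hk, hPne, hval]
      · simp [hpdef, hk]
    · have := Finset.le_sup (f := fun j => if p j = 0 then (⊥ : WithBot ℤ)
        else (((n * (p j).natDegree + j.val : ℕ) : ℤ) : WithBot ℤ)) (Finset.mem_univ j0)
      simpa [height, hpdef, hPne, hval] using this
end

section
/- Fix a natural number m with 1 ≤ m < n and let r_1,…,r_m be nonzero elements of 𝕊. Then the set 𝕊 \ (M(r_1) + ⋯ + M(r_m)) is nonempty, and its minimal height m₀ := min{h(q) : q ∈ 𝕊 \ (M(r_1)+⋯+M(r_m)), q ≠ 0} satisfies m₀ ≠ h(r_j) + n·k for every j ∈ {1,…,m} and every k ∈ ℕ ∪ {0} (i.e., m₀ is incongruent to each h(r_j) modulo n). -/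
open Polynomial

/-- `M(r_1) + ... + M(r_m)`: the set of sums of scalar-polynomial multiples of
the vector polynomials `r_1, ..., r_m`. -/
def Msum (n m : ℕ) (r : Fin m → (Fin n → ℂ[X])) : Set (Fin n → ℂ[X]) :=
  {q | ∃ S : Fin m → ℂ[X], q = ∑ j, S j • r j}

lemma height_spec (n : ℕ) (hn : 1 ≤ n) (p : Fin n → ℂ[X]) (hp : p ≠ 0) :
    ∃ a : Fin n, p a ≠ 0 ∧ height n p = (((n * (p a).natDegree + a.val : ℕ) : ℤ) : WithBot ℤ) ∧
      ∀ i : Fin n, p i ≠ 0 → n * (p i).natDegree + i.val ≤ n * (p a).natDegree + a.val := by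
  have : Nonempty (Fin n) := ⟨⟨0, hn⟩⟩
  obtain ⟨b, -, hb⟩ := Finset.exists_mem_eq_sup (Finset.univ : Finset (Fin n))
    Finset.univ_nonempty (fun j => if p j = 0 then (⊥ : WithBot ℤ)
      else (((n * (p j).natDegree + j.val : ℕ) : ℤ) : WithBot ℤ))
  obtain ⟨i0, hi0⟩ := Function.ne_iff.mp hp
  rw [Pi.zero_apply] at hi0
  have hle : ∀ i : Fin n, (if p i = 0 then (⊥ : WithBot ℤ)
      else (((n * (p i).natDegree + i.val : ℕ) : ℤ) : WithBot ℤ)) ≤ height n p := by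
    intro i
    rw [height]
    exact Finset.le_sup (f := fun j => if p j = 0 then (⊥ : WithBot ℤ)
      else (((n * (p j).natDegree + j.val : ℕ) : ℤ) : WithBot ℤ)) (Finset.mem_univ i)
  have hpb : p b ≠ 0 := by
    intro h
    have := hle i0
    rw [if_neg hi0, height, hb, if_pos h] at this
    exact (WithBot.not_coe_le_bot _) this
  refine ⟨b, hpb, ?_, ?_⟩
  · rw [height, hb, if_neg hpb]
  · intro i hi
    have := hle i
    rw [if_neg hi, height, hb, if_neg hpb] at this
    exact_mod_cast this

lemma res_eq (n di dj i j : ℕ) (hi : i < n) (hj : j < n)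
    (h : n * di + i = n * dj + j) : i = j := by
  have h1 : (n * di + i) % n = i := by simp [Nat.mul_add_mod, Nat.mod_eq_of_lt hi]
  have h2 : (n * dj + j) % n = j := by simp [Nat.mul_add_mod, Nat.mod_eq_of_lt hj]
  rw [h, h2] at h1
  exact h1.symm

lemma sub_bound (n i D : ℕ) (u v : ℂ[X]) (hu : u ≠ 0 → n * u.natDegree + i < D)
    (hv : v ≠ 0 → n * v.natDegree + i < D) (h : u - v ≠ 0) :
    n * (u - v).natDegree + i < D := by
  rcases eq_or_ne u 0 with rfl | hu0
  · rw [zero_sub, natDegree_neg]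
    exact hv fun hv0 => h (by simp [hv0])
  rcases eq_or_ne v 0 with rfl | hv0
  · rw [sub_zero]; exact hu hu0
  have h1 := hu hu0
  have h2 := hv hv0
  have h3 : n * (u - v).natDegree ≤ n * max u.natDegree v.natDegree :=
    Nat.mul_le_mul_left n (natDegree_sub_le u v)
  rcases max_cases u.natDegree v.natDegree with ⟨he, -⟩ | ⟨he, -⟩ <;> rw [he] at h3 <;> linarith

/-- For `1 ≤ m < n` and nonzero `r_1, ..., r_m ∈ S`, the set
`S \ (M(r_1) + ... + M(r_m))` is nonempty, and its minimal height is not of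
the form `h(r_j) + n * k` for any `j ∈ {1, ..., m}` and any `k ∈ ℕ ∪ {0}`. -/
theorem stmt_14 (n N : ℕ) (hn : 1 ≤ n) (hN : 1 ≤ N)
    (z : Fin N → ℂ) (α : Fin N → Fin n → ℂ)
    (hα : ∀ j : Fin N, 0 < ∑ k : Fin n, ‖α j k‖)
    (m : ℕ) (hm1 : 1 ≤ m) (hmn : m < n)
    (r : Fin m → (Fin n → ℂ[X]))
    (hr : ∀ j : Fin m, r j ∈ Sol n N z α ∧ r j ≠ 0) :
    (Sol n N z α \ Msum n m r).Nonempty ∧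
      ∀ q ∈ Sol n N z α \ Msum n m r, q ≠ 0 →
        (∀ q' ∈ Sol n N z α \ Msum n m r, q' ≠ 0 → height n q ≤ height n q') →
        ∀ (j : Fin m) (k : ℕ),
          height n q ≠ height n (r j) + (((n * k : ℕ) : ℤ) : WithBot ℤ) := by
  constructor
  · -- Nonemptiness
    set P : ℂ[X] := ∏ j : Fin N, (X - C (z j)) with hPdef
    have hPmonic : P.Monic := monic_prod_of_monic _ _ fun j _ => monic_X_sub_C (z j)
    have hP : P ≠ 0 := hPmonic.ne_zero
    have hPz : ∀ j : Fin N, P.eval (z j) = 0 := by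
      intro j
      rw [hPdef, eval_prod]
      exact Finset.prod_eq_zero (Finset.mem_univ j) (by simp)
    set v : Fin n → (Fin n → ℂ[X]) := fun k => P • (Pi.single k 1 : Fin n → ℂ[X]) with hvdef
    have hvSol : ∀ k : Fin n, v k ∈ Sol n N z α := by
      intro k j
      simp [hvdef, Pi.smul_apply, smul_eq_mul, eval_mul, hPz j]
    by_contra hcon
    rw [Set.not_nonempty_iff_eq_empty] at hcon
    have hvM : ∀ k : Fin n, v k ∈ Msum n m r := by
      intro k
      by_contra hk
      have : v k ∈ Sol n N z α \ Msum n m r := ⟨hvSol k, hk⟩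
      rw [hcon] at this
      exact this
    have hrange : Set.range v ⊆ Submodule.span ℂ[X] (Set.range r) := by
      rintro x ⟨k, rfl⟩
      obtain ⟨S, hS⟩ := hvM k
      exact (Submodule.mem_span_range_iff_exists_fun ℂ[X]).mpr ⟨S, hS.symm⟩
    have hli : LinearIndependent ℂ[X] v := by
      rw [Fintype.linearIndependent_iff]
      intro g hg t
      have ht := congrFun hg t
      simp only [hvdef, Finset.sum_apply, Pi.smul_apply, smul_eq_mul, Pi.zero_apply,
        Pi.single_apply] at ht
      have hone : ∑ x : Fin n, g x * (P * if t = x then (1:ℂ[X]) else 0) = g t * P := by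
        rw [Finset.sum_eq_single t]
        · simp
        · intro b _ hb
          rw [if_neg fun h => hb h.symm]
          simp
        · intro h
          exact absurd (Finset.mem_univ t) h
      rw [hone] at ht
      exact (mul_eq_zero.mp ht).resolve_right hP
    have hcard := linearIndependent_le_span' v hli (Set.range r) hrange
    rw [Cardinal.mk_fin] at hcard
    have hcard2 : Fintype.card (Set.range r) ≤ m := by
      simpa using Fintype.card_range_le r
    have : (n : Cardinal) ≤ (m : Cardinal) :=
      hcard.trans (by exact_mod_cast hcard2)
    have : n ≤ m := by exact_mod_cast this
    omega
  · -- Minimality / incongruence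
    rintro q ⟨hqS, hqM⟩ hq0 hmin j k heq
    obtain ⟨a, hqa, hha, hqmax⟩ := height_spec n hn q hq0
    obtain ⟨b, hrb, hhb, hrmax⟩ := height_spec n hn (r j) (hr j).2
    rw [hha, hhb] at heq
    have heq' : n * (q a).natDegree + a.val
        = (n * ((r j) b).natDegree + b.val) + n * k := by exact_mod_cast heq
    have hab : a.val = b.val := by
      apply res_eq n (q a).natDegree (((r j) b).natDegree + k) a.val b.val a.isLt b.isLt
      rw [heq', Nat.mul_add]; ring
    have hba : a = b := Fin.ext hab
    subst hba
    have hdeg : (q a).natDegree = ((r j) a).natDegree + k := by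
      have h1 : n * (q a).natDegree = n * (((r j) a).natDegree + k) := by
        rw [Nat.mul_add]; omega
      exact Nat.eq_of_mul_eq_mul_left (by omega) h1
    set c : ℂ := (q a).leadingCoeff / ((r j) a).leadingCoeff with hcdef
    have hlcr : ((r j) a).leadingCoeff ≠ 0 := leadingCoeff_ne_zero.mpr hrb
    have hlcq : (q a).leadingCoeff ≠ 0 := leadingCoeff_ne_zero.mpr hqa
    have hc : c ≠ 0 := div_ne_zero hlcq hlcr
    set S : ℂ[X] := C c * X ^ k with hSdef
    have hS : S ≠ 0 := mul_ne_zero (fun h => hc (by simpa using C_eq_zero.mp h))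
      (pow_ne_zero _ X_ne_zero)
    have hSdeg : S.natDegree = k := natDegree_C_mul_X_pow k c hc
    have hSlc : S.leadingCoeff = c := leadingCoeff_C_mul_X_pow c k
    set q' : Fin n → ℂ[X] := q - S • r j with hq'def
    have hq'app : ∀ i : Fin n, q' i = q i - S * (r j) i := by
      intro i; simp [hq'def, Pi.smul_apply, smul_eq_mul]
    -- q' ∈ Sol
    have hq'S : q' ∈ Sol n N z α := by
      intro j'
      have h1 := hqS j'
      have h2 := (hr j).1 j'
      have h3 : ∑ i : Fin n, α j' i * (S.eval (z j') * ((r j) i).eval (z j'))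
          = S.eval (z j') * ∑ i : Fin n, α j' i * ((r j) i).eval (z j') := by
        rw [Finset.mul_sum]; exact Finset.sum_congr rfl fun i _ => by ring
      calc ∑ i : Fin n, α j' i * ((q' i).eval (z j'))
          = ∑ i : Fin n, (α j' i * (q i).eval (z j')
              - α j' i * (S.eval (z j') * ((r j) i).eval (z j'))) := by
            exact Finset.sum_congr rfl fun i _ => by rw [hq'app i, eval_sub, eval_mul]; ring
        _ = 0 := by rw [Finset.sum_sub_distrib, h1, h3, h2, mul_zero, sub_zero]
    -- q' ∉ Msum
    have hq'M : q' ∉ Msum n m r := by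
      rintro ⟨T, hT⟩
      apply hqM
      refine ⟨fun i => T i + if i = j then S else 0, ?_⟩
      have hsum : ∑ i : Fin m, (T i + if i = j then S else 0) • r i
          = (∑ i : Fin m, T i • r i) + S • r j := by
        simp only [add_smul, ite_smul, zero_smul, Finset.sum_add_distrib,
          Finset.sum_ite_eq', Finset.mem_univ, if_true]
      rw [hsum, ← hT, hq'def]
      abel
    -- q' ≠ 0
    have hq'0 : q' ≠ 0 := by
      intro h0
      apply hqM
      refine ⟨fun i => if i = j then S else 0, ?_⟩
      have hsum : ∑ i : Fin m, (if i = j then S else 0) • r i = S • r j := by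
        simp only [ite_smul, zero_smul, Finset.sum_ite_eq', Finset.mem_univ, if_true]
      rw [hsum]
      exact sub_eq_zero.mp (hq'def ▸ h0)
    -- bound: each component of q' has height < D
    set D : ℕ := n * (q a).natDegree + a.val with hDdef
    have Hq : ∀ i : Fin n, i ≠ a → q i ≠ 0 → n * (q i).natDegree + i.val < D := by
      intro i hi hqi
      refine lt_of_le_of_ne (hqmax i hqi) fun h => hi (Fin.ext ?_)
      exact res_eq n (q i).natDegree (q a).natDegree i.val a.val i.isLt a.isLt h
    have HS : ∀ i : Fin n, i ≠ a → S * (r j) i ≠ 0 → n * (S * (r j) i).natDegree + i.val < D := by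
      intro i hi hSi
      have hri : (r j) i ≠ 0 := right_ne_zero_of_mul hSi
      have hnd : (S * (r j) i).natDegree = k + ((r j) i).natDegree := by
        rw [natDegree_mul hS hri, hSdeg]
      have hle : n * ((r j) i).natDegree + i.val ≤ n * ((r j) a).natDegree + a.val :=
        hrmax i hri
      have hne : n * ((r j) i).natDegree + i.val ≠ n * ((r j) a).natDegree + a.val :=
        fun h => hi (Fin.ext
          (res_eq n ((r j) i).natDegree ((r j) a).natDegree i.val a.val i.isLt a.isLt h))
      have hlt := lt_of_le_of_ne hle hne
      have e1 : n * (k + ((r j) i).natDegree) = n * k + n * ((r j) i).natDegree := Nat.mul_add n _ _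
      have e2 : n * (q a).natDegree = n * ((r j) a).natDegree + n * k := by
        rw [hdeg, Nat.mul_add]
      rw [hnd, hDdef]
      linarith
    have hcomp : ∀ i : Fin n, q' i ≠ 0 → n * (q' i).natDegree + i.val < D := by
      intro i hi
      rw [hq'app i] at hi ⊢
      rcases eq_or_ne i a with rfl | hia
      · -- leading cancellation at index a
        have hra' : S * (r j) i ≠ 0 := mul_ne_zero hS hrb
        have hndeq : (S * (r j) i).natDegree = (q i).natDegree := by
          rw [natDegree_mul hS hrb, hSdeg, hdeg]; ring
        have hdegeq : (q i).degree = (S * (r j) i).degree := by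
          rw [degree_eq_natDegree hqa, degree_eq_natDegree hra', hndeq]
        have hlceq : (q i).leadingCoeff = (S * (r j) i).leadingCoeff := by
          rw [leadingCoeff_mul, hSlc, hcdef, div_mul_cancel₀ _ hlcr]
        have hlt : (q i - S * (r j) i).degree < (q i).degree :=
          degree_sub_lt hdegeq hqa hlceq
        have hndlt : (q i - S * (r j) i).natDegree < (q i).natDegree :=
          natDegree_lt_natDegree hi hlt
        have hmul : n * (q i - S * (r j) i).natDegree < n * (q i).natDegree :=
          Nat.mul_lt_mul_of_le_of_lt (le_refl n) hndlt (by omega)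
        rw [hDdef]
        have := i.isLt
        linarith
      · exact sub_bound n i.val D (q i) (S * (r j) i) (Hq i hia) (HS i hia) hi
    -- height q' < height q
    have hlt : height n q' < height n q := by
      rw [height, hha]
      rw [Finset.sup_lt_iff (by exact_mod_cast WithBot.bot_lt_coe ((D : ℤ)))]
      intro i _
      split
      · exact_mod_cast WithBot.bot_lt_coe ((D : ℤ))
      · next h => exact_mod_cast hcomp i h
    exact absurd (hmin q' ⟨hq'S, hq'M⟩ hq'0) (not_le.mpr hlt)
end

section
/- Let n ≥ 2 and let r_1,…,r_n be generators of 𝕊. Then every p ∈ 𝕊 can be written in the form p = ∑_{j=1}^n S_j·r_j where each S_j ∈ ℂ[X] is a scalar polynomial; that is, 𝕊 = M(r_1) + M(r_2) + ⋯ + M(r_n). -/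
open Polynomial

/-- `M(r_1) + ... + M(r_(j-1))`: the set of combinations of scalar-polynomial
multiples of the `r_l` with `l < j` (for `j = 0` this set is `{0}`). -/
def prevSet (n : ℕ) (r : Fin n → (Fin n → ℂ[X])) (j : Fin n) : Set (Fin n → ℂ[X]) :=
  {q | ∃ S : Fin n → ℂ[X], q = ∑ l ∈ Finset.univ.filter (fun l => l < j), S l • r l}

/-- `r_1, ..., r_n` are generators of the solution set `S`: each `r_j` belongs
to `S \ (M(r_1) + ... + M(r_(j-1)))` and has minimal height among the elements
of that set.  (For `j = 1` this says that `r_1` is a nonzero element of `S` of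
minimal height.) -/
def IsGenerators (n N : ℕ) (z : Fin N → ℂ) (α : Fin N → Fin n → ℂ)
    (r : Fin n → (Fin n → ℂ[X])) : Prop :=
  ∀ j : Fin n, r j ∈ Sol n N z α ∧ r j ∉ prevSet n r j ∧
    ∀ q ∈ Sol n N z α, q ∉ prevSet n r j → height n (r j) ≤ height n q

section auxLemmas
variable {n : ℕ}

lemma entry_le_height {p : Fin n → ℂ[X]} {k : Fin n} (h : p k ≠ 0) :
    (((n * (p k).natDegree + k.val : ℕ) : ℤ) : WithBot ℤ) ≤ height n p := by
  have := Finset.le_sup (f := fun j => if p j = 0 then (⊥ : WithBot ℤ)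
    else (((n * (p j).natDegree + j.val : ℕ) : ℤ) : WithBot ℤ)) (Finset.mem_univ k)
  simp only [if_neg h] at this
  exact this

lemma height_ne_bot {p : Fin n → ℂ[X]} (hp : p ≠ 0) : height n p ≠ ⊥ := by
  obtain ⟨k, hk⟩ := Function.ne_iff.mp hp
  intro h
  have := entry_le_height (n := n) hk
  rw [h, le_bot_iff] at this
  exact (WithBot.coe_ne_bot) this

lemma exists_lead {p : Fin n → ℂ[X]} (hp : p ≠ 0) :
    ∃ k : Fin n, p k ≠ 0 ∧
      height n p = (((n * (p k).natDegree + k.val : ℕ) : ℤ) : WithBot ℤ) := by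
  obtain ⟨k0, hk0⟩ := Function.ne_iff.mp hp
  have : Nonempty (Fin n) := ⟨k0⟩
  obtain ⟨k, -, hk⟩ := Finset.exists_mem_eq_sup Finset.univ Finset.univ_nonempty
    (fun j => if p j = 0 then (⊥ : WithBot ℤ)
      else (((n * (p j).natDegree + j.val : ℕ) : ℤ) : WithBot ℤ))
  by_cases h : p k = 0
  · rw [if_pos h] at hk
    exact absurd hk (height_ne_bot hp)
  · rw [if_neg h] at hk
    exact ⟨k, h, hk⟩

lemma entry_le_of_height_eq {p : Fin n → ℂ[X]} {k : Fin n} {H : ℕ}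
    (hH : height n p = ((H : ℤ) : WithBot ℤ)) (hk : p k ≠ 0) :
    n * (p k).natDegree + k.val ≤ H := by
  have := entry_le_height (n := n) hk
  rw [hH] at this
  exact_mod_cast this

lemma lead_unique {a b k m : ℕ} (hk : k < n) (hm : m < n) (h : n * a + k = n * b + m) :
    k = m ∧ a = b := by
  have h1 : (n * a + k) % n = k := by
    rw [Nat.mul_add_mod, Nat.mod_eq_of_lt hk]
  have h2 : (n * b + m) % n = m := by
    rw [Nat.mul_add_mod, Nat.mod_eq_of_lt hm]
  have hkm : k = m := by rw [← h1, h, h2]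
  subst hkm
  refine ⟨rfl, ?_⟩
  have := Nat.add_right_cancel h
  exact Nat.eq_of_mul_eq_mul_left (by omega) this

lemma step_lemma (hn : 1 ≤ n) (p q : Fin n → ℂ[X]) (k : Fin n)
    (hpk : p k ≠ 0) (hqk : q k ≠ 0)
    (hp : height n p = (((n * (p k).natDegree + k.val : ℕ) : ℤ) : WithBot ℤ))
    (hq : height n q = (((n * (q k).natDegree + k.val : ℕ) : ℤ) : WithBot ℤ))
    (hle : height n q ≤ height n p) :
    ∃ S : ℂ[X], height n (p - S • q) < height n p := by
  set dp := (p k).natDegree with hdp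
  set dq := (q k).natDegree with hdq
  have hdqdp : dq ≤ dp := by
    rw [hp, hq] at hle
    have h1 : n * dq + k.val ≤ n * dp + k.val := by exact_mod_cast hle
    have h2 : n * dq ≤ n * dp := by omega
    exact Nat.le_of_mul_le_mul_left h2 (by omega)
  set c : ℂ := (p k).leadingCoeff / (q k).leadingCoeff with hc
  have hc0 : c ≠ 0 := div_ne_zero (leadingCoeff_ne_zero.mpr hpk) (leadingCoeff_ne_zero.mpr hqk)
  set d : ℕ := dp - dq with hd
  set S : ℂ[X] := C c * X ^ d with hS
  have hS0 : S ≠ 0 := mul_ne_zero (by simpa using hc0) (pow_ne_zero _ X_ne_zero)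
  have hSdeg : S.natDegree = d := by rw [hS, natDegree_C_mul hc0, natDegree_X_pow]
  refine ⟨S, ?_⟩
  rw [hp]
  rw [height, Finset.sup_lt_iff (by exact_mod_cast WithBot.bot_lt_coe _)]
  intro m _
  by_cases hm0 : (p - S • q) m = 0
  · rw [if_pos hm0]
    exact_mod_cast WithBot.bot_lt_coe _
  rw [if_neg hm0]
  have hval : (p - S • q) m = p m - S * q m := by
    simp [Pi.sub_apply, Pi.smul_apply, smul_eq_mul]
  have natgoal : n * ((p - S • q) m).natDegree + m.val < n * dp + k.val →
      ((((n * ((p - S • q) m).natDegree + m.val : ℕ) : ℤ) : WithBot ℤ)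
        < (((n * dp + k.val : ℕ) : ℤ) : WithBot ℤ)) := by
    intro he
    exact_mod_cast he
  apply natgoal
  by_cases hmk : m = k
  · subst hmk
    have hSq_ne : S * q m ≠ 0 := mul_ne_zero hS0 hqk
    have hdegSq : (S * q m).natDegree = dp := by
      rw [natDegree_mul hS0 hqk, hSdeg]
      omega
    have hlcSq : (S * q m).leadingCoeff = (p m).leadingCoeff := by
      rw [leadingCoeff_mul, hS, leadingCoeff_mul, leadingCoeff_C, leadingCoeff_X_pow, mul_one, hc,
        div_mul_cancel₀]
      exact leadingCoeff_ne_zero.mpr hqk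
    have hdeg_eq : (p m).degree = (S * q m).degree := by
      rw [degree_eq_natDegree hpk, degree_eq_natDegree hSq_ne, hdegSq]
    have hlt : ((p - S • q) m).degree < (p m).degree := by
      rw [hval]
      exact degree_sub_lt hdeg_eq hpk hlcSq.symm
    have hnd : ((p - S • q) m).natDegree < dp := natDegree_lt_natDegree hm0 hlt
    have hmul : n * (((p - S • q) m).natDegree + 1) ≤ n * dp := Nat.mul_le_mul_left n hnd
    have hexp : n * (((p - S • q) m).natDegree + 1)
        = n * ((p - S • q) m).natDegree + n := by ring
    omega
  · have hmk' : m.val ≠ k.val := fun h => hmk (Fin.ext h)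
    have hboundp : p m ≠ 0 → n * (p m).natDegree + m.val < n * dp + k.val := by
      intro hpm
      have h1 := entry_le_of_height_eq hp hpm
      rcases lt_or_eq_of_le h1 with h | h
      · exact h
      · exact absurd ((lead_unique m.isLt k.isLt h).1) hmk'
    have hboundq : q m ≠ 0 → n * (d + (q m).natDegree) + m.val < n * dp + k.val := by
      intro hqm
      have h1 := entry_le_of_height_eq hq hqm
      have h2 : n * (q m).natDegree + m.val < n * dq + k.val := by
        rcases lt_or_eq_of_le h1 with h | h
        · exact h
        · exact absurd ((lead_unique m.isLt k.isLt h).1) hmk'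
      have h3 : n * (d + (q m).natDegree) = n * d + n * (q m).natDegree := by ring
      have h4 : n * dp = n * d + n * dq := by
        rw [hd, ← Nat.mul_add]
        congr 1
        omega
      omega
    have hdegSqle : (S * q m).natDegree ≤ d + (q m).natDegree := by
      calc (S * q m).natDegree ≤ S.natDegree + (q m).natDegree := natDegree_mul_le
        _ ≤ d + (q m).natDegree := by omega
    by_cases hpm : p m = 0
    · have hqm : q m ≠ 0 := by
        intro hqm
        exact hm0 (by rw [hval, hpm, hqm, mul_zero, sub_zero])
      have hb1 : ((p - S • q) m).natDegree ≤ d + (q m).natDegree := by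
        rw [hval, hpm, zero_sub, natDegree_neg]
        exact hdegSqle
      have hb2 := hboundq hqm
      have hb3 : n * ((p - S • q) m).natDegree ≤ n * (d + (q m).natDegree) :=
        Nat.mul_le_mul_left n hb1
      omega
    · by_cases hqm : q m = 0
      · have heq : (p - S • q) m = p m := by rw [hval, hqm, mul_zero, sub_zero]
        rw [heq]
        exact hboundp hpm
      · have hmax : ((p - S • q) m).natDegree
            ≤ max (p m).natDegree (d + (q m).natDegree) := by
          rw [hval]
          exact le_trans (natDegree_sub_le _ _) (max_le_max le_rfl hdegSqle)
        have h1 := hboundp hpm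
        have h2 := hboundq hqm
        have hM : n * max (p m).natDegree (d + (q m).natDegree) + m.val
            < n * dp + k.val := by
          rcases le_total (p m).natDegree (d + (q m).natDegree) with h | h
          · rw [max_eq_right h]; exact h2
          · rw [max_eq_left h]; exact h1
        have hb3 : n * ((p - S • q) m).natDegree
            ≤ n * max (p m).natDegree (d + (q m).natDegree) :=
          Nat.mul_le_mul_left n hmax
        omega

variable {N : ℕ} {z : Fin N → ℂ} {α : Fin N → Fin n → ℂ}

lemma sol_sub_smul {p q : Fin n → ℂ[X]} (hp : p ∈ Sol n N z α) (hq : q ∈ Sol n N z α)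
    (S : ℂ[X]) : p - S • q ∈ Sol n N z α := by
  intro j
  have h1 := hp j
  have h2 := hq j
  calc ∑ k, α j k * ((p - S • q) k).eval (z j)
      = ∑ k, (α j k * (p k).eval (z j) - S.eval (z j) * (α j k * (q k).eval (z j))) := by
        refine Finset.sum_congr rfl fun k _ => ?_
        simp only [Pi.sub_apply, Pi.smul_apply, smul_eq_mul, eval_sub, eval_mul]
        ring
    _ = (∑ k, α j k * (p k).eval (z j))
        - S.eval (z j) * ∑ k, α j k * (q k).eval (z j) := by
        rw [Finset.sum_sub_distrib, Finset.mul_sum]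
    _ = 0 := by rw [h1, h2]; ring

lemma msum_subset_sol {r : Fin n → (Fin n → ℂ[X])} (hSol : ∀ j, r j ∈ Sol n N z α) :
    Msum n n r ⊆ Sol n N z α := by
  rintro p ⟨S, rfl⟩ j
  calc ∑ k, α j k * ((∑ i, S i • r i) k).eval (z j)
      = ∑ k, ∑ i, (S i).eval (z j) * (α j k * ((r i) k).eval (z j)) := by
        refine Finset.sum_congr rfl fun k _ => ?_
        rw [Finset.sum_apply, eval_finset_sum, Finset.mul_sum]
        refine Finset.sum_congr rfl fun i _ => ?_
        simp only [Pi.smul_apply, smul_eq_mul, eval_mul]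
        ring
    _ = ∑ i, (S i).eval (z j) * ∑ k, α j k * ((r i) k).eval (z j) := by
        rw [Finset.sum_comm]
        exact Finset.sum_congr rfl fun i _ => (Finset.mul_sum _ _ _).symm
    _ = 0 := by
        refine Finset.sum_eq_zero fun i _ => ?_
        rw [hSol i j, mul_zero]

lemma msum_add_smul (r : Fin n → (Fin n → ℂ[X])) {q : Fin n → ℂ[X]}
    (hq : q ∈ Msum n n r) (S : ℂ[X]) (j : Fin n) : q + S • r j ∈ Msum n n r := by
  obtain ⟨T, hT⟩ := hq
  refine ⟨fun l => T l + if l = j then S else 0, ?_⟩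
  have key : ∑ l, (T l + if l = j then S else 0) • r l
      = (∑ l, T l • r l) + S • r j := by
    simp only [add_smul, Finset.sum_add_distrib]
    congr 1
    rw [Finset.sum_eq_single j]
    · simp
    · intro b _ hb
      simp [hb]
    · intro h
      exact absurd (Finset.mem_univ j) h
  rw [hT]
  exact key.symm

lemma zero_mem_prevSet (r : Fin n → (Fin n → ℂ[X])) (j : Fin n) :
    (0 : Fin n → ℂ[X]) ∈ prevSet n r j :=
  ⟨0, by simp⟩

lemma prevSet_mono (r : Fin n → (Fin n → ℂ[X])) {i j : Fin n} (hij : i ≤ j) :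
    prevSet n r i ⊆ prevSet n r j := by
  rintro q ⟨S, rfl⟩
  refine ⟨fun l => if l < i then S l else 0, ?_⟩
  have hsub : Finset.univ.filter (fun l => l < i) ⊆ Finset.univ.filter (fun l => l < j) := by
    intro x hx
    simp only [Finset.mem_filter, Finset.mem_univ, true_and] at hx ⊢
    exact lt_of_lt_of_le hx hij
  rw [show (∑ l ∈ Finset.univ.filter (fun l => l < i), S l • r l)
      = ∑ l ∈ Finset.univ.filter (fun l => l < i), (if l < i then S l else 0) • r l from
    Finset.sum_congr rfl fun l hl => by
      rw [if_pos (Finset.mem_filter.mp hl).2]]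
  exact Finset.sum_subset hsub fun x _ hxs => by
    rw [if_neg fun h => hxs (Finset.mem_filter.mpr ⟨Finset.mem_univ x, h⟩), zero_smul]

lemma prevSet_add_smul (r : Fin n → (Fin n → ℂ[X])) {q : Fin n → ℂ[X]} {i j : Fin n}
    (hq : q ∈ prevSet n r j) (S : ℂ[X]) (hij : i < j) : q + S • r i ∈ prevSet n r j := by
  obtain ⟨T, hT⟩ := hq
  refine ⟨fun l => T l + if l = i then S else 0, ?_⟩
  have key : ∑ l ∈ Finset.univ.filter (fun l => l < j),
      (T l + if l = i then S else 0) • r l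
      = (∑ l ∈ Finset.univ.filter (fun l => l < j), T l • r l) + S • r i := by
    simp only [add_smul, Finset.sum_add_distrib]
    congr 1
    rw [Finset.sum_eq_single_of_mem (s := Finset.univ.filter (fun l => l < j))
      (f := fun x => (if x = i then S else 0) • r x) i (by simp [hij])]
    · simp
    · intro b _ hb
      simp [hb]
  rw [hT]
  exact key.symm

lemma prevSet_subset_msum (r : Fin n → (Fin n → ℂ[X])) (j : Fin n) :
    prevSet n r j ⊆ Msum n n r := by
  rintro q ⟨S, rfl⟩
  refine ⟨fun l => if l < j then S l else 0, ?_⟩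
  rw [Finset.sum_filter]
  refine Finset.sum_congr rfl fun l _ => ?_
  by_cases h : l < j
  · simp [h]
  · simp [h]

end auxLemmas

/-- For `n ≥ 2` and generators `r_1, ..., r_n` of `S`, every solution `p ∈ S`
can be written as `p = ∑_(j=1)^n S_j • r_j` with scalar polynomials `S_j`;
that is, `S = M(r_1) + M(r_2) + ... + M(r_n)`. -/
theorem stmt_19 (n N : ℕ) (hn : 2 ≤ n) (hN : 1 ≤ N)
    (z : Fin N → ℂ) (α : Fin N → Fin n → ℂ)
    (hα : ∀ j : Fin N, 0 < ∑ k : Fin n, ‖α j k‖)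
    (r : Fin n → (Fin n → ℂ[X])) (hr : IsGenerators n N z α r) :
    Sol n N z α = Msum n n r := by
  have hn1 : 1 ≤ n := le_trans (by norm_num) hn
  have hSol : ∀ j, r j ∈ Sol n N z α := fun j => (hr j).1
  have hne0 : ∀ j, r j ≠ 0 := fun j h => (hr j).2.1 (h ▸ zero_mem_prevSet r j)
  choose K hK1 hK2 using fun j => exists_lead (hne0 j)
  have hmono : ∀ i j : Fin n, i ≤ j → height n (r i) ≤ height n (r j) := by
    intro i j hij
    exact (hr i).2.2 (r j) (hSol j) fun h => (hr j).2.1 (prevSet_mono r hij h)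
  have haux : ∀ i j : Fin n, i < j → K i = K j → False := by
    intro i j hij hK
    obtain ⟨S, hS⟩ := step_lemma hn1 (r j) (r i) (K j) (hK1 j)
      (hK ▸ hK1 i) (hK2 j) (hK ▸ hK2 i) (hmono i j (le_of_lt hij))
    by_cases hprev : r j - S • r i ∈ prevSet n r j
    · refine (hr j).2.1 ?_
      have := prevSet_add_smul r hprev S hij
      rwa [sub_add_cancel] at this
    · exact absurd hS (not_lt.mpr ((hr j).2.2 _
        (sol_sub_smul (hSol j) (hSol i) S) hprev))
  have hKinj : Function.Injective K := by
    intro i j hij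
    by_contra hne
    rcases lt_or_gt_of_ne hne with h | h
    · exact haux i j h hij
    · exact haux j i h hij.symm
  have hKsurj : Function.Surjective K := Finite.injective_iff_surjective.mp hKinj
  have main : ∀ H : ℕ, ∀ p ∈ Sol n N z α,
      height n p < (((H : ℕ) : ℤ) : WithBot ℤ) → p ∈ Msum n n r := by
    intro H
    induction H with
    | zero =>
      intro p hp hlt
      have hp0 : p = 0 := by
        by_contra h
        obtain ⟨k, hk, he⟩ := exists_lead h
        rw [he] at hlt
        have : ((n * (p k).natDegree + k.val : ℕ) : ℤ) < ((0 : ℕ) : ℤ) := by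
          exact_mod_cast hlt
        omega
      exact hp0 ▸ ⟨0, by simp⟩
    | succ H ih =>
      intro p hp hlt
      by_cases hp0 : p = 0
      · exact hp0 ▸ ⟨0, by simp⟩
      by_cases hpM : p ∈ Msum n n r
      · exact hpM
      obtain ⟨k, hpk, hpe⟩ := exists_lead hp0
      obtain ⟨j, hjk⟩ := hKsurj k
      have hnotprev : p ∉ prevSet n r j := fun h => hpM (prevSet_subset_msum r j h)
      have hrle : height n (r j) ≤ height n p := (hr j).2.2 p hp hnotprev
      obtain ⟨S, hS⟩ := step_lemma hn1 p (r j) k hpk (hjk ▸ hK1 j) hpe (hjk ▸ hK2 j) hrle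
      have hq'Sol : p - S • r j ∈ Sol n N z α := sol_sub_smul hp (hSol j) S
      have h2 : (n * (p k).natDegree + k.val : ℕ) < H + 1 := by
        rw [hpe] at hlt
        exact_mod_cast hlt
      have h3 : height n p ≤ (((H : ℕ) : ℤ) : WithBot ℤ) := by
        rw [hpe]
        exact_mod_cast Nat.lt_succ_iff.mp h2
      have hq'M := ih _ hq'Sol (lt_of_lt_of_le hS h3)
      have := msum_add_smul r hq'M S j
      rwa [sub_add_cancel] at this
  apply Set.Subset.antisymm
  · intro p hp
    by_cases hp0 : p = 0
    · exact hp0 ▸ ⟨0, by simp⟩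
    obtain ⟨k, hk, he⟩ := exists_lead hp0
    refine main (n * (p k).natDegree + k.val + 1) p hp ?_
    rw [he]
    exact_mod_cast Nat.lt_succ_self _
  · exact msum_subset_sol hSol
end
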